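/- Let n ≥ 0 be an integer and let t, x_0, x_1, …, x_n be real numbers. Then Σ over all (m_1,…,m_n) ∈ ℕ^n with m_1+⋯+m_n ≤ n of [(1+t·x_0)^{n−M_1}/(n−M_1)!] · ∏_{j=1}^n [t(x_j−x_{j−1})]^{m_j}·(n−j+1−M_{j+1})/m_j! = ∏_{i=1}^n (1+t·x_i), where M_j := m_j + m_{j+1} + ⋯ + m_n and M_{n+1} := 0. -/

import Mathlib

open Finset

namespace BMI

def P (n : ℕ) (m : ℕ → ℕ) : Prop :=
  (∀ j, (j = 0 ∨ n < j) → m j = 0) ∧ ∑ j ∈ Finset.Icc 1 n, m j ≤ n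

def Q (n : ℕ) (m : ℕ → ℕ) : Prop :=
  (∀ j, (j ≤ 1 ∨ n < j) → m j = 0) ∧ ∑ j ∈ Finset.Icc 2 n, m j ≤ n

noncomputable def F (n : ℕ) (t : ℝ) (x : ℕ → ℝ) (m : ℕ → ℕ) : ℝ :=
  (1 + t * x 0) ^ (n - ∑ j ∈ Finset.Icc 1 n, m j) /
      (Nat.factorial (n - ∑ j ∈ Finset.Icc 1 n, m j) : ℝ) *
    ∏ j ∈ Finset.Icc 1 n,
      (t * (x j - x (j - 1))) ^ (m j) *
        ((n : ℝ) - (j : ℝ) + 1 - (∑ i ∈ Finset.Icc (j + 1) n, m i : ℕ)) /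
          (Nat.factorial (m j) : ℝ)

instance finP (n : ℕ) : Finite {m : ℕ → ℕ // P n m} := by
  have hb : ∀ (m : {m : ℕ → ℕ // P n m}) (j : ℕ), m.1 j ≤ n := by
    intro m j
    rcases Nat.eq_zero_or_pos j with h | h
    · simp [m.2.1 j (Or.inl h)]
    rcases le_or_gt j n with h2 | h2
    · exact le_trans (Finset.single_le_sum (f := fun i => m.1 i)
        (fun i _ => Nat.zero_le _) (Finset.mem_Icc.2 ⟨h, h2⟩)) m.2.2
    · simp [m.2.1 j (Or.inr h2)]
  apply Finite.of_injective (β := Fin (n + 1) → Fin (n + 1))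
    (fun m j => ⟨m.1 j, Nat.lt_succ_of_le (hb m j)⟩)
  intro m m' h
  apply Subtype.ext; funext j
  rcases le_or_gt j n with hj | hj
  · have := congrFun h ⟨j, Nat.lt_succ_of_le hj⟩
    simpa using congrArg Fin.val this
  · rw [m.2.1 j (Or.inr hj), m'.2.1 j (Or.inr hj)]

instance finQ (n : ℕ) : Finite {m : ℕ → ℕ // Q n m} := by
  have hb : ∀ (m : {m : ℕ → ℕ // Q n m}) (j : ℕ), m.1 j ≤ n := by
    intro m j
    rcases le_or_gt j 1 with h | h
    · simp [m.2.1 j (Or.inl h)]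
    rcases le_or_gt j n with h2 | h2
    · exact le_trans (Finset.single_le_sum (f := fun i => m.1 i)
        (fun i _ => Nat.zero_le _) (Finset.mem_Icc.2 ⟨h, h2⟩)) m.2.2
    · simp [m.2.1 j (Or.inr h2)]
  apply Finite.of_injective (β := Fin (n + 1) → Fin (n + 1))
    (fun m j => ⟨m.1 j, Nat.lt_succ_of_le (hb m j)⟩)
  intro m m' h
  apply Subtype.ext; funext j
  rcases le_or_gt j n with hj | hj
  · have := congrFun h ⟨j, Nat.lt_succ_of_le hj⟩
    simpa using congrArg Fin.val this
  · rw [m.2.1 j (Or.inr hj), m'.2.1 j (Or.inr hj)]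

lemma Icc_one_eq_insert (n : ℕ) (hn : 1 ≤ n) :
    Finset.Icc 1 n = insert 1 (Finset.Icc 2 n) := by
  ext j; simp only [Finset.mem_Icc, Finset.mem_insert]; omega

/-- binomial sum: `∑_{k=0}^{N} a^{N-k}/(N-k)! * d^k/k! = (a+d)^N/N!` -/
lemma binom_sum (a d : ℝ) (N : ℕ) :
    ∑ k ∈ Finset.range (N + 1),
      a ^ (N - k) / (Nat.factorial (N - k) : ℝ) * (d ^ k / (Nat.factorial k : ℝ))
      = (a + d) ^ N / (Nat.factorial N : ℝ) := by
  rw [add_comm a d, add_pow]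
  rw [Finset.sum_div]
  refine Finset.sum_congr rfl ?_
  intro k hk
  have hk' : k ≤ N := Nat.lt_succ_iff.1 (Finset.mem_range.1 hk)
  rw [Nat.cast_choose ℝ hk']
  have h1 : (Nat.factorial (N - k) : ℝ) ≠ 0 := Nat.cast_ne_zero.2 (Nat.factorial_ne_zero _)
  have h2 : (Nat.factorial k : ℝ) ≠ 0 := Nat.cast_ne_zero.2 (Nat.factorial_ne_zero _)
  field_simp

lemma stepB (n : ℕ) (hn : 1 ≤ n) (t : ℝ) (x : ℕ → ℝ) (p : ℕ → ℕ) (hp : Q n p) :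
    ∑ k ∈ Finset.range (n + 1 - ∑ j ∈ Finset.Icc 2 n, p j),
        F n t x (Function.update p 1 k)
      = ((n - ∑ j ∈ Finset.Icc 2 n, p j : ℕ) : ℝ) *
          ((1 + t * x 1) ^ (n - ∑ j ∈ Finset.Icc 2 n, p j) /
            (Nat.factorial (n - ∑ j ∈ Finset.Icc 2 n, p j) : ℝ)) *
        ∏ j ∈ Finset.Icc 2 n,
          (t * (x j - x (j - 1))) ^ (p j) *
            ((n : ℝ) - (j : ℝ) + 1 - (∑ i ∈ Finset.Icc (j + 1) n, p i : ℕ)) /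
              (Nat.factorial (p j) : ℝ) := by
  set S := ∑ j ∈ Finset.Icc 2 n, p j with hS
  have hSn : S ≤ n := hp.2
  set N := n - S with hN
  set C := ∏ j ∈ Finset.Icc 2 n,
      (t * (x j - x (j - 1))) ^ (p j) *
        ((n : ℝ) - (j : ℝ) + 1 - (∑ i ∈ Finset.Icc (j + 1) n, p i : ℕ)) /
          (Nat.factorial (p j) : ℝ) with hC
  have hrange : n + 1 - S = N + 1 := by omega
  rw [hrange]
  have hstep : ∀ k ∈ Finset.range (N + 1), F n t x (Function.update p 1 k) =
      ((1 + t * x 0) ^ (N - k) / (Nat.factorial (N - k) : ℝ) *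
        ((t * (x 1 - x 0)) ^ k / (Nat.factorial k : ℝ))) * ((N : ℝ) * C) := by
    intro k hk
    have hkN : k ≤ N := Nat.lt_succ_iff.1 (Finset.mem_range.1 hk)
    have hsum : ∑ j ∈ Finset.Icc 1 n, Function.update p 1 k j = k + S := by
      rw [Icc_one_eq_insert n hn, Finset.sum_insert (by simp)]
      simp only [Function.update_self]
      congr 1
      refine Finset.sum_congr rfl ?_
      intro j hj
      exact Function.update_of_ne (by have := Finset.mem_Icc.1 hj; omega) _ _
    have hexp : n - (k + S) = N - k := by omega
    have hprod : ∏ j ∈ Finset.Icc 1 n,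
        (t * (x j - x (j - 1))) ^ (Function.update p 1 k j) *
          ((n : ℝ) - (j : ℝ) + 1 -
            (∑ i ∈ Finset.Icc (j + 1) n, Function.update p 1 k i : ℕ)) /
            (Nat.factorial (Function.update p 1 k j) : ℝ)
        = (t * (x 1 - x 0)) ^ k * ((n : ℝ) - 1 + 1 - (S : ℝ)) / (Nat.factorial k : ℝ)
            * C := by
      rw [Icc_one_eq_insert n hn, Finset.prod_insert (by simp)]
      congr 1
      · have h2 : ∑ i ∈ Finset.Icc (1 + 1) n, Function.update p 1 k i = S := by
          refine Finset.sum_congr rfl ?_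
          intro j hj
          exact Function.update_of_ne (by have := Finset.mem_Icc.1 hj; omega) _ _
        rw [Function.update_self, h2]
        norm_num
      · rw [hC]
        refine Finset.prod_congr rfl ?_
        intro j hj
        have hj2 : 2 ≤ j := (Finset.mem_Icc.1 hj).1
        have hupj : Function.update p 1 k j = p j :=
          Function.update_of_ne (by omega) _ _
        have hsum2 : ∑ i ∈ Finset.Icc (j + 1) n, Function.update p 1 k i
            = ∑ i ∈ Finset.Icc (j + 1) n, p i := by
          refine Finset.sum_congr rfl ?_
          intro i hi
          exact Function.update_of_ne (by have := Finset.mem_Icc.1 hi; omega) _ _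
        rw [hupj, hsum2]
    have hcast : (n : ℝ) - 1 + 1 - (S : ℝ) = (N : ℝ) := by
      rw [hN]
      push_cast [Nat.cast_sub hSn]
      ring
    rw [F, hsum, hprod, hexp, hcast]
    ring
  rw [Finset.sum_congr rfl hstep, ← Finset.sum_mul, binom_sum]
  have : 1 + t * x 0 + t * (x 1 - x 0) = 1 + t * x 1 := by ring
  rw [this]
  ring

lemma sum_update_one (n : ℕ) (hn : 1 ≤ n) (p : ℕ → ℕ) (k : ℕ) :
    ∑ j ∈ Finset.Icc 1 n, Function.update p 1 k j = k + ∑ j ∈ Finset.Icc 2 n, p j := by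
  rw [Icc_one_eq_insert n hn, Finset.sum_insert (by simp)]
  simp only [Function.update_self]
  congr 1
  refine Finset.sum_congr rfl ?_
  intro j hj
  exact Function.update_of_ne (by have := Finset.mem_Icc.1 hj; omega) _ _

lemma sum_update_Icc2 (n : ℕ) (p : ℕ → ℕ) (k : ℕ) :
    ∑ j ∈ Finset.Icc 2 n, Function.update p 1 k j = ∑ j ∈ Finset.Icc 2 n, p j := by
  refine Finset.sum_congr rfl fun j hj => ?_
  exact Function.update_of_ne (by have := Finset.mem_Icc.1 hj; omega) _ _

lemma stepA (n : ℕ) (hn : 1 ≤ n) (f : (ℕ → ℕ) → ℝ)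
    [Fintype {m : ℕ → ℕ // P n m}] [Fintype {m : ℕ → ℕ // Q n m}] :
    ∑ m : {m : ℕ → ℕ // P n m}, f m.1
      = ∑ p : {m : ℕ → ℕ // Q n m},
          ∑ k ∈ Finset.range (n + 1 - ∑ j ∈ Finset.Icc 2 n, p.1 j),
            f (Function.update p.1 1 k) := by
  have hQ : ∀ m : {m : ℕ → ℕ // P n m}, Q n (Function.update m.1 1 0) := by
    intro m
    constructor
    · intro j hj
      rcases eq_or_ne j 1 with rfl | hne
      · simp
      · rw [Function.update_of_ne hne]
        exact m.2.1 j (by omega)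
    · calc ∑ j ∈ Finset.Icc 2 n, Function.update m.1 1 0 j
          = ∑ j ∈ Finset.Icc 2 n, m.1 j := sum_update_Icc2 n _ _
        _ ≤ ∑ j ∈ Finset.Icc 1 n, m.1 j :=
            Finset.sum_le_sum_of_subset (by
              intro j hj; simp only [Finset.mem_Icc] at *; omega)
        _ ≤ n := m.2.2
  have hP : ∀ q : (_ : {m : ℕ → ℕ // Q n m}) × ℕ,
      q ∈ (univ.sigma fun p => Finset.range (n + 1 - ∑ j ∈ Finset.Icc 2 n, p.1 j)) →
      P n (Function.update q.1.1 1 q.2) := by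
    intro q hq
    simp only [Finset.mem_sigma, Finset.mem_univ, Finset.mem_range, true_and] at hq
    constructor
    · intro j hj
      have hj1 : j ≠ 1 := by rcases hj with h | h; omega; omega
      rw [Function.update_of_ne hj1]
      exact q.1.2.1 j (by omega)
    · rw [sum_update_one n hn]
      have hS : ∑ j ∈ Finset.Icc 2 n, q.1.1 j ≤ n := q.1.2.2
      omega
  rw [Finset.sum_sigma']
  refine Finset.sum_bij'
    (i := fun (m : {m : ℕ → ℕ // P n m}) (_ : m ∈ univ) =>
      (⟨⟨Function.update m.1 1 0, hQ m⟩, m.1 1⟩ : (_ : {m : ℕ → ℕ // Q n m}) × ℕ))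
    (j := fun q hq => ⟨Function.update q.1.1 1 q.2, hP q hq⟩) ?_ ?_ ?_ ?_ ?_
  · -- hi
    intro m _
    simp only [Finset.mem_sigma, Finset.mem_univ, Finset.mem_range, true_and]
    rw [sum_update_Icc2 n]
    have h2 : m.1 1 + ∑ j ∈ Finset.Icc 2 n, m.1 j = ∑ j ∈ Finset.Icc 1 n, m.1 j := by
      rw [Icc_one_eq_insert n hn, Finset.sum_insert (by simp)]
    have h3 := m.2.2
    omega
  · intro q hq; exact Finset.mem_univ _
  · -- left_inv
    intro m _
    apply Subtype.ext
    simp only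
    rw [Function.update_idem, Function.update_eq_self]
  · -- right_inv
    intro q hq
    have h1 : Function.update (Function.update q.1.1 1 q.2) 1 0 = q.1.1 := by
      rw [Function.update_idem]
      have h0 : q.1.1 1 = 0 := q.1.2.1 1 (Or.inl le_rfl)
      nth_rewrite 2 [← Function.update_eq_self 1 q.1.1]
      rw [h0]
    refine Sigma.ext (Subtype.ext h1) (heq_of_eq ?_)
    show Function.update q.1.1 1 q.2 1 = q.2
    exact Function.update_self _ _ _
  · -- values
    intro m _
    show f m.1 = f (Function.update (Function.update m.1 1 0) 1 (m.1 1))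
    rw [Function.update_idem, Function.update_eq_self]

lemma sum_shift {M : Type*} [AddCommMonoid M] (g : ℕ → M) (a b : ℕ) :
    ∑ j ∈ Finset.Icc (a + 1) (b + 1), g j = ∑ j ∈ Finset.Icc a b, g (j + 1) := by
  rw [← Finset.map_add_right_Icc a b 1, Finset.sum_map]
  rfl

lemma prod_shift {M : Type*} [CommMonoid M] (g : ℕ → M) (a b : ℕ) :
    ∏ j ∈ Finset.Icc (a + 1) (b + 1), g j = ∏ j ∈ Finset.Icc a b, g (j + 1) := by
  rw [← Finset.map_add_right_Icc a b 1, Finset.prod_map]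
  rfl

lemma stepC (n' : ℕ) (t : ℝ) (x : ℕ → ℝ)
    [Fintype {m : ℕ → ℕ // Q (n' + 1) m}] [Fintype {m : ℕ → ℕ // P n' m}] :
    ∑ p : {m : ℕ → ℕ // Q (n' + 1) m},
      ((n' + 1 - ∑ j ∈ Finset.Icc 2 (n' + 1), p.1 j : ℕ) : ℝ) *
        ((1 + t * x 1) ^ (n' + 1 - ∑ j ∈ Finset.Icc 2 (n' + 1), p.1 j) /
          (Nat.factorial (n' + 1 - ∑ j ∈ Finset.Icc 2 (n' + 1), p.1 j) : ℝ)) *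
      ∏ j ∈ Finset.Icc 2 (n' + 1),
        (t * (x j - x (j - 1))) ^ (p.1 j) *
          (((n' + 1 : ℕ) : ℝ) - (j : ℝ) + 1 -
            (∑ i ∈ Finset.Icc (j + 1) (n' + 1), p.1 i : ℕ)) /
            (Nat.factorial (p.1 j) : ℝ)
      = (1 + t * x 1) *
          ∑ m : {m : ℕ → ℕ // P n' m}, F n' t (fun j => x (j + 1)) m.1 := by
  have hPm : ∀ p : {m : ℕ → ℕ // Q (n' + 1) m},
      ∑ j ∈ Finset.Icc 2 (n' + 1), p.1 j ≤ n' → P n' (fun j => p.1 (j + 1)) := by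
    intro p hp
    constructor
    · intro j hj
      rcases hj with rfl | hj
      · exact p.2.1 1 (Or.inl le_rfl)
      · exact p.2.1 (j + 1) (Or.inr (by omega))
    · calc ∑ j ∈ Finset.Icc 1 n', p.1 (j + 1)
          = ∑ j ∈ Finset.Icc 2 (n' + 1), p.1 j := (sum_shift _ 1 n').symm
        _ ≤ n' := hp
  have hQm : ∀ m : {m : ℕ → ℕ // P n' m}, Q (n' + 1) (fun j => m.1 (j - 1)) := by
    intro m
    constructor
    · intro j hj
      rcases hj with hj | hj
      · show m.1 (j - 1) = 0
        have h0 : j - 1 = 0 := by omega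
        rw [h0]
        exact m.2.1 0 (Or.inl rfl)
      · exact m.2.1 (j - 1) (Or.inr (by omega))
    · have he : ∑ j ∈ Finset.Icc 2 (n' + 1), m.1 (j - 1)
          = ∑ j ∈ Finset.Icc 1 n', m.1 j := by
        rw [show (2 : ℕ) = 1 + 1 from rfl, sum_shift]
        exact Finset.sum_congr rfl fun j _ => by simp
      rw [he]
      exact le_trans m.2.2 (by omega)
  have hsumeq : ∀ m : {m : ℕ → ℕ // P n' m},
      ∑ j ∈ Finset.Icc 2 (n' + 1), m.1 (j - 1) = ∑ j ∈ Finset.Icc 1 n', m.1 j := by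
    intro m
    rw [show (2 : ℕ) = 1 + 1 from rfl, sum_shift]
    exact Finset.sum_congr rfl fun j _ => by simp
  rw [Finset.mul_sum]
  rw [← Finset.sum_filter_of_ne (p := fun p : {m : ℕ → ℕ // Q (n' + 1) m} =>
      ∑ j ∈ Finset.Icc 2 (n' + 1), p.1 j ≤ n') (s := univ) ?_]
  swap
  · intro p _ hne
    by_contra h
    apply hne
    have hS : ∑ j ∈ Finset.Icc 2 (n' + 1), p.1 j = n' + 1 := by
      have := p.2.2; omega
    rw [hS]
    simp
  refine Finset.sum_bij'
    (i := fun (p : {m : ℕ → ℕ // Q (n' + 1) m}) hp =>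
      (⟨fun j => p.1 (j + 1), hPm p (by simpa using hp)⟩ : {m : ℕ → ℕ // P n' m}))
    (j := fun m _ => (⟨fun j => m.1 (j - 1), hQm m⟩ : {m : ℕ → ℕ // Q (n' + 1) m}))
    ?_ ?_ ?_ ?_ ?_
  · intro p hp
    exact Finset.mem_univ _
  · intro m _
    simp only [Finset.mem_filter, Finset.mem_univ, true_and]
    rw [hsumeq m]
    exact m.2.2
  · -- left inverse
    intro p hp
    apply Subtype.ext
    funext j
    simp only
    rcases Nat.eq_zero_or_pos j with rfl | hj
    · show p.1 (0 - 1 + 1) = p.1 0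
      rw [p.2.1 0 (Or.inl (by omega)), p.2.1 1 (Or.inl le_rfl)]
    · show p.1 (j - 1 + 1) = p.1 j
      have h1 : j - 1 + 1 = j := by omega
      rw [h1]
  · -- right inverse
    intro m _
    apply Subtype.ext
    funext j
    simp
  · -- values
    intro p hp
    simp only [Finset.mem_filter, Finset.mem_univ, true_and] at hp
    set S := ∑ j ∈ Finset.Icc 2 (n' + 1), p.1 j with hSdef
    have hsum' : ∑ j ∈ Finset.Icc 1 n', p.1 (j + 1) = S := by
      rw [hSdef, show (2 : ℕ) = 1 + 1 from rfl, sum_shift]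
    simp only [F]
    rw [hsum']
    have hN : n' + 1 - S = (n' - S) + 1 := by omega
    have hfac : (Nat.factorial ((n' - S) + 1) : ℝ)
        = ((n' - S : ℕ) + 1 : ℝ) * (Nat.factorial (n' - S) : ℝ) := by
      rw [Nat.factorial_succ]; push_cast; ring
    have hcastN : ((n' + 1 - S : ℕ) : ℝ) = ((n' - S : ℕ) : ℝ) + 1 := by
      rw [hN]; push_cast; ring
    have hprodeq : ∏ j ∈ Finset.Icc 2 (n' + 1),
        (t * (x j - x (j - 1))) ^ (p.1 j) *
          (((n' + 1 : ℕ) : ℝ) - (j : ℝ) + 1 -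
            (∑ i ∈ Finset.Icc (j + 1) (n' + 1), p.1 i : ℕ)) /
            (Nat.factorial (p.1 j) : ℝ)
        = ∏ j ∈ Finset.Icc 1 n',
            (t * (x (j + 1) - x (j - 1 + 1))) ^ (p.1 (j + 1)) *
              ((n' : ℝ) - (j : ℝ) + 1 -
                (∑ i ∈ Finset.Icc (j + 1) n', p.1 (i + 1) : ℕ)) /
                (Nat.factorial (p.1 (j + 1)) : ℝ) := by
      rw [show (2 : ℕ) = 1 + 1 from rfl, prod_shift]
      refine Finset.prod_congr rfl fun j hj => ?_
      have hsum2 : ∑ i ∈ Finset.Icc (j + 1 + 1) (n' + 1), p.1 i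
          = ∑ i ∈ Finset.Icc (j + 1) n', p.1 (i + 1) := sum_shift _ _ _
      have hj1 : (1 : ℕ) ≤ j := (Finset.mem_Icc.1 hj).1
      have e1 : j + 1 - 1 = j := by omega
      have e2 : j - 1 + 1 = j := by omega
      rw [hsum2, e1, e2]
      congr 2
      push_cast
      ring
    rw [hprodeq, hN]
    have hcast2 : ((n' - S + 1 : ℕ) : ℝ) = ((n' - S : ℕ) : ℝ) + 1 := by
      push_cast; ring
    rw [hcast2, hfac]
    have h01 : x (0 + 1) = x 1 := by norm_num
    rw [h01]
    have hfacne : (Nat.factorial (n' - S) : ℝ) ≠ 0 :=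
      Nat.cast_ne_zero.2 (Nat.factorial_ne_zero _)
    have hne : ((n' - S : ℕ) : ℝ) + 1 ≠ 0 := by positivity
    have key : ∀ (c f b Pr : ℝ), f ≠ 0 → c + 1 ≠ 0 →
        (c + 1) * (b ^ (n' - S + 1) / ((c + 1) * f)) * Pr
          = b * (b ^ (n' - S) / f * Pr) := by
      intro c f b Pr hf hc
      rw [pow_succ]
      field_simp
    exact key _ _ _ _ hfacne hne

lemma main (t : ℝ) (n : ℕ) (x : ℕ → ℝ) :
    (∑' m : {m : ℕ → ℕ // P n m}, F n t x m.1) = ∏ i ∈ Finset.Icc 1 n, (1 + t * x i) := by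
  induction n generalizing x with
  | zero =>
    haveI : Unique {m : ℕ → ℕ // P 0 m} :=
      { default := ⟨fun _ => 0, fun j _ => rfl, by simp⟩
        uniq := fun m => Subtype.ext (funext fun j => m.2.1 j (by omega)) }
    rw [tsum_eq_single default (fun b hb => absurd (Subsingleton.elim b default) hb)]
    simp [F]
  | succ n' ih =>
    haveI : Fintype {m : ℕ → ℕ // P (n' + 1) m} := @Fintype.ofFinite _ (finP (n' + 1))
    haveI : Fintype {m : ℕ → ℕ // Q (n' + 1) m} := @Fintype.ofFinite _ (finQ (n' + 1))
    haveI : Fintype {m : ℕ → ℕ // P n' m} := @Fintype.ofFinite _ (finP n')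
    rw [tsum_fintype]
    rw [stepA (n' + 1) (by omega) (F (n' + 1) t x)]
    rw [Finset.sum_congr rfl (fun p _ => stepB (n' + 1) (by omega) t x p.1 p.2)]
    rw [stepC n' t x]
    have ih' := ih (fun j => x (j + 1))
    rw [tsum_fintype] at ih'
    rw [ih']
    have h1 : ∏ i ∈ Finset.Icc 1 n', (1 + t * x (i + 1))
        = ∏ i ∈ Finset.Icc 2 (n' + 1), (1 + t * x i) := by
      rw [show (2 : ℕ) = 1 + 1 from rfl, prod_shift]
    rw [h1, Icc_one_eq_insert (n' + 1) (by omega), Finset.prod_insert (by simp)]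

end BMI

/-- The identity
`Σ_{(m_1,…,m_n) ∈ ℕ^n, m_1+⋯+m_n ≤ n} (1+t x_0)^{n−M_1}/(n−M_1)! ·
  ∏_{j=1}^n [t(x_j−x_{j−1})]^{m_j}(n−j+1−M_{j+1})/m_j! = ∏_{i=1}^n (1+t x_i)`,
where `M_j = m_j + ⋯ + m_n`.  Tuples are encoded as functions `m : ℕ → ℕ`
supported on `[1, n]`, and `M j = Σ_{i ∈ [j, n]} m i` (so `M (n+1) = 0`). -/
theorem binomial_multisum_identity (n : ℕ) (t : ℝ) (x : ℕ → ℝ) :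
    (∑' m : {m : ℕ → ℕ //
        (∀ j, (j = 0 ∨ n < j) → m j = 0) ∧ ∑ j ∈ Finset.Icc 1 n, m j ≤ n},
      (1 + t * x 0) ^ (n - ∑ j ∈ Finset.Icc 1 n, m.1 j) /
          (Nat.factorial (n - ∑ j ∈ Finset.Icc 1 n, m.1 j) : ℝ) *
        ∏ j ∈ Finset.Icc 1 n,
          (t * (x j - x (j - 1))) ^ (m.1 j) *
            ((n : ℝ) - (j : ℝ) + 1 - (∑ i ∈ Finset.Icc (j + 1) n, m.1 i : ℕ)) /
              (Nat.factorial (m.1 j) : ℝ)) =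
      ∏ i ∈ Finset.Icc 1 n, (1 + t * x i) := by
  exact BMI.main t n x
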